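/- Let G be a coverable signed K4-minor-free graph that has no signed circuit 6-cover and has the minimum number of edges among all such signed graphs. Then no two negative loops of G share a common vertex. -/

import Mathlib

/-!
Common framework: signed multigraphs represented by finite vertex/edge sets over ℕ,
an incidence map into `Sym2 ℕ` and a sign map into `ℤ`.
-/

structure SignedGraph where
  verts : Finset ℕ
  edges : Finset ℕ
  ends : ℕ → Sym2 ℕ
  sgn : ℕ → ℤ
  ends_mem : ∀ e ∈ edges, ∀ v ∈ ends e, v ∈ verts
  sgn_unit : ∀ e ∈ edges, sgn e = 1 ∨ sgn e = -1

namespace SignedGraph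

/-- `H` is a (signed) subgraph of `G`. -/
def IsSubgraph (H G : SignedGraph) : Prop :=
  H.verts ⊆ G.verts ∧ H.edges ⊆ G.edges ∧
    ∀ e ∈ H.edges, H.ends e = G.ends e ∧ H.sgn e = G.sgn e

/-- `G` is the union of its subgraphs `H₁` and `H₂`. -/
def IsUnion (G H₁ H₂ : SignedGraph) : Prop :=
  IsSubgraph H₁ G ∧ IsSubgraph H₂ G ∧
    G.verts = H₁.verts ∪ H₂.verts ∧ G.edges = H₁.edges ∪ H₂.edges

/-- `G` is the union of its subgraphs `H₁`, `H₂` and `H₃`. -/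
def IsUnion3 (G H₁ H₂ H₃ : SignedGraph) : Prop :=
  IsSubgraph H₁ G ∧ IsSubgraph H₂ G ∧ IsSubgraph H₃ G ∧
    G.verts = H₁.verts ∪ H₂.verts ∪ H₃.verts ∧
    G.edges = H₁.edges ∪ H₂.edges ∪ H₃.edges

/-- Degree of a vertex: a loop contributes 2, an ordinary incident edge 1. -/
def degree (G : SignedGraph) (v : ℕ) : ℕ :=
  ∑ e ∈ G.edges, (if G.ends e = s(v, v) then 2 else if v ∈ G.ends e then 1 else 0)

/-- Adjacency via some edge. -/
def Adj (G : SignedGraph) (u v : ℕ) : Prop := ∃ e ∈ G.edges, G.ends e = s(u, v)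

/-- `G` is connected (and nonempty). -/
def Connected (G : SignedGraph) : Prop :=
  G.verts.Nonempty ∧ ∀ u ∈ G.verts, ∀ v ∈ G.verts, Relation.ReflTransGen G.Adj u v

/-- Number of negative edges. -/
def negEdgeCount (G : SignedGraph) : ℕ := (G.edges.filter fun e => G.sgn e = -1).card

/-- A circuit: a connected 2-regular graph. -/
def IsCircuit (C : SignedGraph) : Prop :=
  C.Connected ∧ C.edges.Nonempty ∧ ∀ v ∈ C.verts, C.degree v = 2

/-- A balanced circuit: evenly many negative edges. -/
def IsBalancedCircuit (C : SignedGraph) : Prop := C.IsCircuit ∧ C.negEdgeCount % 2 = 0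

def IsUnbalancedCircuit (C : SignedGraph) : Prop := C.IsCircuit ∧ C.negEdgeCount % 2 = 1

/-- `P` is an `x y`-path (possibly trivial, i.e. a single vertex, when `x = y`). -/
def IsPath (P : SignedGraph) (x y : ℕ) : Prop :=
  (x = y ∧ P.verts = {x} ∧ P.edges = ∅) ∨
  (x ≠ y ∧ P.Connected ∧ x ∈ P.verts ∧ y ∈ P.verts ∧
    P.degree x = 1 ∧ P.degree y = 1 ∧
    ∀ v ∈ P.verts, v ≠ x → v ≠ y → P.degree v = 2)

/-- Sign of a subgraph: the product of the signs of its edges. -/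
def sgnOf (P : SignedGraph) : ℤ := ∏ e ∈ P.edges, P.sgn e

/-- `T` is a tadpole at `x`: union of an `x y`-path and an unbalanced circuit
meeting the path exactly in its end `y`. -/
def IsTadpoleAt (T : SignedGraph) (x : ℕ) : Prop :=
  ∃ y P C, T.IsUnion P C ∧ IsPath P x y ∧ IsUnbalancedCircuit C ∧
    P.verts ∩ C.verts = {y} ∧ P.edges ∩ C.edges = ∅

/-- `T` is a tadpole at `x` whose tadpole-path contains the edge `e₀`. -/
def TadpolePathContains (T : SignedGraph) (x e₀ : ℕ) : Prop :=
  ∃ y P C, T.IsUnion P C ∧ IsPath P x y ∧ IsUnbalancedCircuit C ∧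
    P.verts ∩ C.verts = {y} ∧ P.edges ∩ C.edges = ∅ ∧ e₀ ∈ P.edges

/-- `T` is a tadpole at `x` whose unbalanced circuit lies in `K`. -/
def IsTadpoleWithCircuitIn (T : SignedGraph) (x : ℕ) (K : SignedGraph) : Prop :=
  ∃ y P C, T.IsUnion P C ∧ IsPath P x y ∧ IsUnbalancedCircuit C ∧
    P.verts ∩ C.verts = {y} ∧ P.edges ∩ C.edges = ∅ ∧ IsSubgraph C K

/-- A barbell: two unbalanced circuits joined by a (possibly trivial) path meeting
the circuits only in its ends. -/
def IsBarbell (B : SignedGraph) : Prop :=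
  ∃ x y P C₁ C₂, IsPath P x y ∧ IsUnbalancedCircuit C₁ ∧ IsUnbalancedCircuit C₂ ∧
    IsUnion3 B P C₁ C₂ ∧
    P.verts ∩ C₁.verts = {x} ∧ P.verts ∩ C₂.verts = {y} ∧
    C₁.verts ∩ C₂.verts = ({x} : Finset ℕ) ∩ ({y} : Finset ℕ) ∧
    P.edges ∩ C₁.edges = ∅ ∧ P.edges ∩ C₂.edges = ∅ ∧ C₁.edges ∩ C₂.edges = ∅

/-- A signed circuit: a balanced circuit or a barbell. -/
def IsSignedCircuit (S : SignedGraph) : Prop := IsBalancedCircuit S ∨ IsBarbell S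

/-- The number of members of the family `F` (with multiplicity) containing the edge `e`. -/
def coverCount (F : Multiset SignedGraph) (e : ℕ) : ℕ :=
  Multiset.card (F.filter fun S => e ∈ S.edges)

/-- `F` is a signed circuit `k`-cover of `G`. -/
def IsSignedCircuitCover (G : SignedGraph) (k : ℕ) (F : Multiset SignedGraph) : Prop :=
  (∀ S ∈ F, IsSubgraph S G ∧ IsSignedCircuit S) ∧ ∀ e ∈ G.edges, coverCount F e = k

def HasSixCover (G : SignedGraph) : Prop := ∃ F, IsSignedCircuitCover G 6 F

/-- `G` is coverable: some family of signed circuits covers every edge at least once. -/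
def Coverable (G : SignedGraph) : Prop :=
  ∃ F : Multiset SignedGraph, (∀ S ∈ F, IsSubgraph S G ∧ IsSignedCircuit S) ∧
    ∀ e ∈ G.edges, 0 < coverCount F e

/-- The vertex set `W` is connected within `G`. -/
def ConnectedWithin (G : SignedGraph) (W : Finset ℕ) : Prop :=
  ∀ u ∈ W, ∀ v ∈ W,
    Relation.ReflTransGen (fun a b => a ∈ W ∧ b ∈ W ∧ G.Adj a b) u v

/-- `G` has a `K₄`-minor (branch-set characterization). -/
def HasK4Minor (G : SignedGraph) : Prop :=
  ∃ B : Fin 4 → Finset ℕ,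
    (∀ i, (B i).Nonempty) ∧ (∀ i, B i ⊆ G.verts) ∧
    (∀ i j, i ≠ j → Disjoint (B i) (B j)) ∧
    (∀ i, G.ConnectedWithin (B i)) ∧
    (∀ i j, i ≠ j → ∃ e ∈ G.edges, ∃ u ∈ B i, ∃ v ∈ B j, G.ends e = s(u, v))

def K4MinorFree (G : SignedGraph) : Prop := ¬ G.HasK4Minor

/-- `H` is obtained from `G` by a sequence of switchings. -/
def SEquiv (G H : SignedGraph) : Prop :=
  G.verts = H.verts ∧ G.edges = H.edges ∧ (∀ e ∈ G.edges, G.ends e = H.ends e) ∧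
  ∃ χ : ℕ → ℤ, (∀ v, χ v = 1 ∨ χ v = -1) ∧
    ∀ e ∈ G.edges, ∀ u v, G.ends e = s(u, v) → H.sgn e = χ u * χ v * G.sgn e

/-- The negativeness of `G`: minimum number of negative edges over all equivalent graphs. -/
noncomputable def negativeness (G : SignedGraph) : ℕ :=
  sInf {n | ∃ H, SEquiv G H ∧ H.negEdgeCount = n}

/-- `G` is balanced: equivalent to a graph with no negative edges. -/
def Balanced (G : SignedGraph) : Prop := ∃ H, SEquiv G H ∧ H.negEdgeCount = 0

/-- Deleting a set of edges. -/
def deleteEdges (G : SignedGraph) (S : Finset ℕ) : SignedGraph where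
  verts := G.verts
  edges := G.edges \ S
  ends := G.ends
  sgn := G.sgn
  ends_mem := fun e he v hv => G.ends_mem e (Finset.mem_sdiff.mp he).1 v hv
  sgn_unit := fun e he => G.sgn_unit e (Finset.mem_sdiff.mp he).1

def deleteEdge (G : SignedGraph) (b : ℕ) : SignedGraph := G.deleteEdges {b}

/-- Deleting a vertex (and all incident edges). -/
def deleteVertex (G : SignedGraph) (x : ℕ) : SignedGraph where
  verts := G.verts.erase x
  edges := G.edges.filter fun e => x ∉ G.ends e
  ends := G.ends
  sgn := G.sgn
  ends_mem := by
    intro e he v hv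
    rw [Finset.mem_filter] at he
    exact Finset.mem_erase.mpr ⟨fun h => he.2 (h ▸ hv), G.ends_mem e he.1 v hv⟩
  sgn_unit := fun e he => G.sgn_unit e (Finset.mem_filter.mp he).1

/-- Deleting all loops. -/
def removeLoops (G : SignedGraph) : SignedGraph where
  verts := G.verts
  edges := G.edges.filter fun e => ¬ (G.ends e).IsDiag
  ends := G.ends
  sgn := G.sgn
  ends_mem := fun e he v hv => G.ends_mem e (Finset.mem_filter.mp he).1 v hv
  sgn_unit := fun e he => G.sgn_unit e (Finset.mem_filter.mp he).1

/-- `b` is a cut edge: deleting it disconnects its two ends. -/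
def IsCutEdge (G : SignedGraph) (b : ℕ) : Prop :=
  b ∈ G.edges ∧ ∃ u v, G.ends b = s(u, v) ∧
    ¬ Relation.ReflTransGen (G.deleteEdge b).Adj u v

/-- `H` is a connected component of `K`: a connected subgraph closed under incidence. -/
def IsComponent (K H : SignedGraph) : Prop :=
  IsSubgraph H K ∧ H.Connected ∧
    ∀ e ∈ K.edges, ∀ u v, K.ends e = s(u, v) → u ∈ H.verts → e ∈ H.edges ∧ v ∈ H.verts

/-- `G` is 2-connected: connected and without cut vertices. -/
def TwoConnected (G : SignedGraph) : Prop :=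
  G.Connected ∧ ∀ x ∈ G.verts, ∀ u ∈ (G.deleteVertex x).verts,
    ∀ v ∈ (G.deleteVertex x).verts, Relation.ReflTransGen (G.deleteVertex x).Adj u v

/-- A two-terminal signed graph with source `x` and target `y`
(`x = y` only for a single negative loop). -/
def IsTwoTerminal (H : SignedGraph) (x y : ℕ) : Prop :=
  H.Connected ∧ H.edges.Nonempty ∧ x ∈ H.verts ∧ y ∈ H.verts ∧
    (x = y → H.verts = {x} ∧ ∃ e, H.edges = {e} ∧ H.ends e = s(x, x) ∧ H.sgn e = -1)

/-- `H` is a piece of `G` at `{x, y}`: `G` is the parallel connection of `H`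
with another two-terminal graph. -/
def IsPiece (G H : SignedGraph) (x y : ℕ) : Prop :=
  IsTwoTerminal H x y ∧ ∃ H', IsTwoTerminal H' x y ∧ G.IsUnion H H' ∧
    H.verts ∩ H'.verts = ({x, y} : Finset ℕ) ∧ H.edges ∩ H'.edges = ∅

/-- `G` is the parallel connection of `H₁` and `H₂` with terminals `x ≠ y`. -/
def IsParallel2 (G H₁ H₂ : SignedGraph) (x y : ℕ) : Prop :=
  x ≠ y ∧ IsTwoTerminal H₁ x y ∧ IsTwoTerminal H₂ x y ∧
    G.IsUnion H₁ H₂ ∧ H₁.verts ∩ H₂.verts = ({x, y} : Finset ℕ) ∧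
    H₁.edges ∩ H₂.edges = ∅

/-- `G` is the parallel connection of the list `Hs` of pieces with terminals `x, y`. -/
def IsParallelDecomp (G : SignedGraph) (Hs : List SignedGraph) (x y : ℕ) : Prop :=
  x ≠ y ∧ (∀ H ∈ Hs, IsTwoTerminal H x y ∧ IsSubgraph H G) ∧
  Hs.Pairwise (fun H K => H.verts ∩ K.verts = ({x, y} : Finset ℕ) ∧ H.edges ∩ K.edges = ∅) ∧
  G.verts = Hs.foldr (fun H s => H.verts ∪ s) ∅ ∧
  G.edges = Hs.foldr (fun H s => H.edges ∪ s) ∅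

/-- `G` is the series connection of the two-terminal graphs `B 1, …, B n`,
where `B i` has terminals `xs (i-1)` and `xs i`. -/
def IsSeriesConn (G : SignedGraph) (n : ℕ) (B : ℕ → SignedGraph) (xs : ℕ → ℕ) : Prop :=
  1 ≤ n ∧
  (∀ i ∈ Finset.Icc 1 n, IsTwoTerminal (B i) (xs (i - 1)) (xs i)) ∧
  (∀ i ∈ Finset.Icc 1 n, IsSubgraph (B i) G) ∧
  G.verts = (Finset.Icc 1 n).biUnion (fun i => (B i).verts) ∧
  G.edges = (Finset.Icc 1 n).biUnion (fun i => (B i).edges) ∧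
  (∀ i ∈ Finset.Icc 1 n, ∀ j ∈ Finset.Icc 1 n, i < j →
    (B i).edges ∩ (B j).edges = ∅ ∧
    (B i).verts ∩ (B j).verts =
      ({xs (i - 1), xs i} : Finset ℕ) ∩ ({xs (j - 1), xs j} : Finset ℕ))

/-- The structured parts of a `Ψ_{xy}(t)`-cover of `H`:
`t` positive `xy`-paths, `t` negative `xy`-paths, `t` tadpoles at `x`,
`6 - 2t` tadpoles at `y`, and some signed circuits, forming a signed subgraph 6-cover. -/
def IsPsiCoverParts (H : SignedGraph) (x y : ℕ) (t : ℕ)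
    (Fp Fn Fx Fy Fc : Multiset SignedGraph) : Prop :=
  t ≤ 3 ∧
  (∀ S ∈ Fp + Fn + Fx + Fy + Fc, IsSubgraph S H) ∧
  (∀ e ∈ H.edges, coverCount (Fp + Fn + Fx + Fy + Fc) e = 6) ∧
  Multiset.card Fp = t ∧ Multiset.card Fn = t ∧
  Multiset.card Fx = t ∧ Multiset.card Fy = 6 - 2 * t ∧
  (∀ P ∈ Fp, IsPath P x y ∧ sgnOf P = 1) ∧
  (∀ P ∈ Fn, IsPath P x y ∧ sgnOf P = -1) ∧
  (∀ T ∈ Fx, IsTadpoleAt T x) ∧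
  (∀ T ∈ Fy, IsTadpoleAt T y) ∧
  (∀ C ∈ Fc, IsSignedCircuit C)

/-- `H` has a `Ψ_{xy}(t)`-cover. -/
def HasPsiCover (H : SignedGraph) (x y : ℕ) (t : ℕ) : Prop :=
  ∃ Fp Fn Fx Fy Fc, IsPsiCoverParts H x y t Fp Fn Fx Fy Fc

/-- `H` has a `Ψ_{xy}(2)`-cover in which no tadpole at `x` contains `y` and
no tadpole at `y` contains `x`. -/
def HasPsi2NoCross (H : SignedGraph) (x y : ℕ) : Prop :=
  ∃ Fp Fn Fx Fy Fc, IsPsiCoverParts H x y 2 Fp Fn Fx Fy Fc ∧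
    (∀ T ∈ Fx, y ∉ T.verts) ∧ (∀ T ∈ Fy, x ∉ T.verts)

/-- The structured parts of a `Ψ*_{xy}(2)`-cover of `H` relative to the edge `e₀ = xy`. -/
def IsPsiStarCoverParts (H : SignedGraph) (x y e₀ : ℕ)
    (Fp Fn Fc : Multiset SignedGraph) (Tx₁ Tx₂ Ty₁ Ty₂ : SignedGraph) : Prop :=
  e₀ ∈ H.edges ∧ H.ends e₀ = s(x, y) ∧
  IsPsiCoverParts H x y 2 Fp Fn {Tx₁, Tx₂} {Ty₁, Ty₂} Fc ∧
  y ∉ Tx₁.verts ∧ TadpolePathContains Tx₂ x e₀ ∧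
  x ∉ Ty₁.verts ∧ TadpolePathContains Ty₂ y e₀

/-- `H` has a `Ψ*_{xy}(2)`-cover. -/
def HasPsiStarCover (H : SignedGraph) (x y : ℕ) : Prop :=
  ∃ e₀ Fp Fn Fc Tx₁ Tx₂ Ty₁ Ty₂, IsPsiStarCoverParts H x y e₀ Fp Fn Fc Tx₁ Tx₂ Ty₁ Ty₂

/-- The signed graph `R₀(x, y)`: an unbalanced 2-circuit on `x, y`. -/
def IsR0 (H : SignedGraph) (x y : ℕ) : Prop :=
  x ≠ y ∧ H.verts = {x, y} ∧
  ∃ e f, e ≠ f ∧ H.edges = {e, f} ∧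
    H.ends e = s(x, y) ∧ H.sgn e = 1 ∧ H.ends f = s(x, y) ∧ H.sgn f = -1

/-- The signed graph `R₁(x, y)`: a positive triangle on `x, y, z` with a negative loop at `z`. -/
def IsR1 (H : SignedGraph) (x y : ℕ) : Prop :=
  ∃ z, x ≠ y ∧ x ≠ z ∧ y ≠ z ∧ H.verts = {x, y, z} ∧
  ∃ e₁ e₂ e₃ e₄, [e₁, e₂, e₃, e₄].Nodup ∧ H.edges = {e₁, e₂, e₃, e₄} ∧
    H.ends e₁ = s(x, y) ∧ H.sgn e₁ = 1 ∧
    H.ends e₂ = s(y, z) ∧ H.sgn e₂ = 1 ∧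
    H.ends e₃ = s(z, x) ∧ H.sgn e₃ = 1 ∧
    H.ends e₄ = s(z, z) ∧ H.sgn e₄ = -1

/-- The signed graph `R₂(x, y)`: a positive triangle on `x, y, w` with an extra
negative edge joining `w` and `y`. -/
def IsR2 (H : SignedGraph) (x y : ℕ) : Prop :=
  ∃ w, x ≠ y ∧ x ≠ w ∧ y ≠ w ∧ H.verts = {x, y, w} ∧
  ∃ e₁ e₂ e₃ e₄, [e₁, e₂, e₃, e₄].Nodup ∧ H.edges = {e₁, e₂, e₃, e₄} ∧
    H.ends e₁ = s(x, y) ∧ H.sgn e₁ = 1 ∧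
    H.ends e₂ = s(y, w) ∧ H.sgn e₂ = 1 ∧
    H.ends e₃ = s(w, x) ∧ H.sgn e₃ = 1 ∧
    H.ends e₄ = s(w, y) ∧ H.sgn e₄ = -1

/-- The signed graph `R₃(x, y)`: a positive 4-circuit `x y u w x` with an extra
negative edge joining `w` and `u`. -/
def IsR3 (H : SignedGraph) (x y : ℕ) : Prop :=
  ∃ u w, [x, y, u, w].Nodup ∧ H.verts = {x, y, u, w} ∧
  ∃ e₁ e₂ e₃ e₄ e₅, [e₁, e₂, e₃, e₄, e₅].Nodup ∧ H.edges = {e₁, e₂, e₃, e₄, e₅} ∧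
    H.ends e₁ = s(x, y) ∧ H.sgn e₁ = 1 ∧
    H.ends e₂ = s(y, u) ∧ H.sgn e₂ = 1 ∧
    H.ends e₃ = s(u, w) ∧ H.sgn e₃ = 1 ∧
    H.ends e₄ = s(w, x) ∧ H.sgn e₄ = 1 ∧
    H.ends e₅ = s(w, u) ∧ H.sgn e₅ = -1

/-- The signed graph `R₄(x, y)`: `R₃(x, y)` with an extra positive edge joining `x` and `u`. -/
def IsR4 (H : SignedGraph) (x y : ℕ) : Prop :=
  ∃ u w, [x, y, u, w].Nodup ∧ H.verts = {x, y, u, w} ∧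
  ∃ e₁ e₂ e₃ e₄ e₅ e₆, [e₁, e₂, e₃, e₄, e₅, e₆].Nodup ∧
    H.edges = {e₁, e₂, e₃, e₄, e₅, e₆} ∧
    H.ends e₁ = s(x, y) ∧ H.sgn e₁ = 1 ∧
    H.ends e₂ = s(y, u) ∧ H.sgn e₂ = 1 ∧
    H.ends e₃ = s(u, w) ∧ H.sgn e₃ = 1 ∧
    H.ends e₄ = s(w, x) ∧ H.sgn e₄ = 1 ∧
    H.ends e₅ = s(w, u) ∧ H.sgn e₅ = -1 ∧
    H.ends e₆ = s(x, u) ∧ H.sgn e₆ = 1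

/-- The signed graph `R₅(x, y)`: vertices `x, y, u, t, v`, positive edges
`vx, xy, yu, xu, ut, tv` and a negative edge joining `t` and `v`. -/
def IsR5 (H : SignedGraph) (x y : ℕ) : Prop :=
  ∃ u t v, [x, y, u, t, v].Nodup ∧ H.verts = {x, y, u, t, v} ∧
  ∃ e₁ e₂ e₃ e₄ e₅ e₆ e₇, [e₁, e₂, e₃, e₄, e₅, e₆, e₇].Nodup ∧
    H.edges = {e₁, e₂, e₃, e₄, e₅, e₆, e₇} ∧
    H.ends e₁ = s(v, x) ∧ H.sgn e₁ = 1 ∧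
    H.ends e₂ = s(x, y) ∧ H.sgn e₂ = 1 ∧
    H.ends e₃ = s(y, u) ∧ H.sgn e₃ = 1 ∧
    H.ends e₄ = s(x, u) ∧ H.sgn e₄ = 1 ∧
    H.ends e₅ = s(u, t) ∧ H.sgn e₅ = 1 ∧
    H.ends e₆ = s(t, v) ∧ H.sgn e₆ = 1 ∧
    H.ends e₇ = s(t, v) ∧ H.sgn e₇ = -1

/-- The two-terminal signed graph `D₁(x, y)`: vertices `x, z, y`, positive edges
`xz` and `zy`, and one negative edge parallel to `xz`. -/
def IsD1 (H : SignedGraph) (x y : ℕ) : Prop :=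
  ∃ z, x ≠ y ∧ x ≠ z ∧ y ≠ z ∧ H.verts = {x, z, y} ∧
  ∃ e₁ e₂ e₃, [e₁, e₂, e₃].Nodup ∧ H.edges = {e₁, e₂, e₃} ∧
    H.ends e₁ = s(x, z) ∧ H.sgn e₁ = 1 ∧
    H.ends e₂ = s(z, y) ∧ H.sgn e₂ = 1 ∧
    H.ends e₃ = s(x, z) ∧ H.sgn e₃ = -1

/-- The two-terminal signed graph `D₂(x, y)`: a positive path `x u v y` together
with one negative edge parallel to `uv`. -/
def IsD2 (H : SignedGraph) (x y : ℕ) : Prop :=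
  ∃ u v, [x, u, v, y].Nodup ∧ H.verts = {x, u, v, y} ∧
  ∃ e₁ e₂ e₃ e₄, [e₁, e₂, e₃, e₄].Nodup ∧ H.edges = {e₁, e₂, e₃, e₄} ∧
    H.ends e₁ = s(x, u) ∧ H.sgn e₁ = 1 ∧
    H.ends e₂ = s(u, v) ∧ H.sgn e₂ = 1 ∧
    H.ends e₃ = s(v, y) ∧ H.sgn e₃ = 1 ∧
    H.ends e₄ = s(u, v) ∧ H.sgn e₄ = -1

/-- `G` is the graph `P(H₁ ∪ y₁z, H₂ ∪ y₂z)`: the two-terminal graphs `H₁(x, y₁)`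
and `H₂(x, y₂)` glued at `x`, each extended by a new edge to a new vertex `z`. -/
def IsTwoBlockConn (G H₁ H₂ : SignedGraph) (x y₁ y₂ z e₁ e₂ : ℕ) : Prop :=
  IsTwoTerminal H₁ x y₁ ∧ IsTwoTerminal H₂ x y₂ ∧
  H₁.verts ∩ H₂.verts = {x} ∧ H₁.edges ∩ H₂.edges = ∅ ∧
  z ∉ H₁.verts ∧ z ∉ H₂.verts ∧
  e₁ ∉ H₁.edges ∧ e₁ ∉ H₂.edges ∧ e₂ ∉ H₁.edges ∧ e₂ ∉ H₂.edges ∧ e₁ ≠ e₂ ∧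
  G.verts = insert z (H₁.verts ∪ H₂.verts) ∧
  G.edges = insert e₁ (insert e₂ (H₁.edges ∪ H₂.edges)) ∧
  IsSubgraph H₁ G ∧ IsSubgraph H₂ G ∧
  G.ends e₁ = s(y₁, z) ∧ G.ends e₂ = s(y₂, z) ∧
  (G.sgn e₁ = 1 ∨ G.sgn e₁ = -1) ∧ (G.sgn e₂ = 1 ∨ G.sgn e₂ = -1)

/-- `G'` is obtained from `G` by adding a new negative loop `ℓ` at `x`. -/
def IsAddNegLoop (G' G : SignedGraph) (x ℓ : ℕ) : Prop :=
  x ∈ G.verts ∧ ℓ ∉ G.edges ∧ G'.verts = G.verts ∧ G'.edges = insert ℓ G.edges ∧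
  IsSubgraph G G' ∧ G'.ends ℓ = s(x, x) ∧ G'.sgn ℓ = -1

/-- A minimal counterexample to the main theorem: a coverable signed
`K₄`-minor-free graph without a signed circuit 6-cover, with the minimum
number of edges among all such graphs. -/
def MinimalCounterexample (G : SignedGraph) : Prop :=
  G.Coverable ∧ G.K4MinorFree ∧ ¬ G.HasSixCover ∧
    ∀ H : SignedGraph, H.Coverable → H.K4MinorFree → ¬ H.HasSixCover →
      G.edges.card ≤ H.edges.card

end SignedGraph

namespace SignedGraph

lemma subgraph_trans {A B C : SignedGraph} (h1 : IsSubgraph A B) (h2 : IsSubgraph B C) :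
    IsSubgraph A C :=
  ⟨h1.1.trans h2.1, h1.2.1.trans h2.2.1, fun e he =>
    ⟨(h1.2.2 e he).1.trans (h2.2.2 e (h1.2.1 he)).1,
     (h1.2.2 e he).2.trans (h2.2.2 e (h1.2.1 he)).2⟩⟩

lemma deleteEdges_subgraph (G : SignedGraph) (S : Finset ℕ) :
    IsSubgraph (G.deleteEdges S) G :=
  ⟨subset_rfl, Finset.sdiff_subset, fun _ _ => ⟨rfl, rfl⟩⟩

lemma loop_only_edge {H : SignedGraph} {v ℓ : ℕ} (hl : ℓ ∈ H.edges)
    (he : H.ends ℓ = s(v, v)) (hdeg : H.degree v = 2) :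
    ∀ g ∈ H.edges, v ∈ H.ends g → g = ℓ := by
  intro g hg hv
  by_contra hne
  have hsum := Finset.sum_erase_add H.edges
    (fun e => if H.ends e = s(v, v) then 2 else if v ∈ H.ends e then 1 else 0) hl
  rw [if_pos he] at hsum
  have hd : H.degree v =
      ∑ e ∈ H.edges, (if H.ends e = s(v, v) then 2 else if v ∈ H.ends e then 1 else 0) := rfl
  rw [hd, ← hsum] at hdeg
  have hz : ∑ e ∈ H.edges.erase ℓ,
      (if H.ends e = s(v, v) then 2 else if v ∈ H.ends e then 1 else 0) = 0 := by omega
  have := (Finset.sum_eq_zero_iff.mp hz) g (Finset.mem_erase.mpr ⟨hne, hg⟩)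
  by_cases h1 : H.ends g = s(v, v)
  · rw [if_pos h1] at this; omega
  · rw [if_neg h1, if_pos hv] at this; omega

lemma stay_at_loop {H : SignedGraph} {v ℓ : ℕ} (he : H.ends ℓ = s(v, v))
    (key : ∀ g ∈ H.edges, v ∈ H.ends g → g = ℓ) :
    ∀ u, Relation.ReflTransGen H.Adj v u → u = v := by
  intro u h
  induction h with
  | refl => rfl
  | tail _ hadj ih =>
      obtain ⟨g, hg, hge⟩ := hadj
      rw [ih] at hge
      have hvg : v ∈ H.ends g := by rw [hge]; simp
      rw [key g hg hvg] at hge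
      rw [he] at hge
      rcases Sym2.eq_iff.mp hge with ⟨-, h'⟩ | ⟨h', -⟩ <;> exact h'.symm

lemma circuit_loop {C : SignedGraph} (hC : IsCircuit C) {v ℓ : ℕ}
    (hl : ℓ ∈ C.edges) (he : C.ends ℓ = s(v, v)) :
    C.verts = {v} ∧ C.edges = {ℓ} := by
  have hv : v ∈ C.verts := C.ends_mem ℓ hl v (by rw [he]; simp)
  have hdeg : C.degree v = 2 := hC.2.2 v hv
  have key := loop_only_edge hl he hdeg
  have hstay := stay_at_loop he key
  have hverts : C.verts = {v} := by
    apply Finset.Subset.antisymm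
    · intro u hu
      rw [Finset.mem_singleton]
      exact hstay u (hC.1.2 v hv u hu)
    · simpa using hv
  have hall : ∀ z : Sym2 ℕ, (∀ w ∈ z, w = v) → z = s(v, v) := by
    intro z
    induction z using Sym2.ind with
    | _ a b =>
      intro h
      rw [h a (by simp), h b (by simp)]
  have hedges_loop : ∀ g ∈ C.edges, C.ends g = s(v, v) := by
    intro g hg
    refine hall _ (fun w hw => ?_)
    have := C.ends_mem g hg w hw
    rw [hverts] at this
    simpa using this
  have hcard : C.edges.card = 1 := by
    have h2 : C.degree v = 2 * C.edges.card := by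
      have : C.degree v = ∑ e ∈ C.edges,
          (if C.ends e = s(v, v) then 2 else if v ∈ C.ends e then 1 else 0) := rfl
      rw [this, Finset.sum_congr rfl (fun g hg => if_pos (hedges_loop g hg))]
      simp [mul_comm]
    omega
  obtain ⟨a, ha⟩ := Finset.card_eq_one.mp hcard
  rw [ha] at hl ⊢
  rw [Finset.mem_singleton] at hl
  rw [hl]
  exact ⟨hverts, rfl⟩

lemma path_no_loop {P : SignedGraph} {x y : ℕ} (hP : IsPath P x y)
    {v ℓ : ℕ} (hl : ℓ ∈ P.edges) (he : P.ends ℓ = s(v, v)) : False := by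
  rcases hP with ⟨_, _, hE⟩ | ⟨hxy, hconn, hx, hy, hdx, hdy, hdeg⟩
  · rw [hE] at hl; simp at hl
  · have hv : v ∈ P.verts := P.ends_mem ℓ hl v (by rw [he]; simp)
    have h2 : 2 ≤ P.degree v := by
      have hterm : (2 : ℕ) =
          (if P.ends ℓ = s(v, v) then 2 else if v ∈ P.ends ℓ then 1 else 0) := by
        rw [if_pos he]
      have hd : P.degree v = ∑ e ∈ P.edges,
          (if P.ends e = s(v, v) then 2 else if v ∈ P.ends e then 1 else 0) := rfl
      rw [hterm, hd]
      exact Finset.single_le_sum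
        (f := fun e => if P.ends e = s(v, v) then 2 else if v ∈ P.ends e then 1 else 0)
        (fun _ _ => Nat.zero_le _) hl
    have hvx : v ≠ x := by
      intro h; rw [h, hdx] at h2; omega
    have hvy : v ≠ y := by
      intro h; rw [h, hdy] at h2; omega
    have hdv := hdeg v hv hvx hvy
    have hstay := stay_at_loop he (loop_only_edge hl he hdv)
    exact hvx (hstay x (hconn.2 v hv x hx)).symm

lemma path_symm {P : SignedGraph} {x y : ℕ} (hP : IsPath P x y) : IsPath P y x := by
  rcases hP with ⟨h, hv, hE⟩ | ⟨hxy, hc, hx, hy, hdx, hdy, hdeg⟩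
  · exact Or.inl ⟨h.symm, by rw [hv, h], hE⟩
  · exact Or.inr ⟨hxy.symm, hc, hy, hx, hdy, hdx, fun w hw h1 h2 => hdeg w hw h2 h1⟩

lemma isUnion3_swap {G P C₁ C₂ : SignedGraph} (h : IsUnion3 G P C₁ C₂) :
    IsUnion3 G P C₂ C₁ :=
  ⟨h.1, h.2.2.1, h.2.1, by rw [h.2.2.2.1, Finset.union_right_comm],
    by rw [h.2.2.2.2, Finset.union_right_comm]⟩

/-- A single negative loop as a standalone graph. -/
def mkLoop (v ℓ : ℕ) : SignedGraph where
  verts := {v}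
  edges := {ℓ}
  ends := fun _ => s(v, v)
  sgn := fun _ => -1
  ends_mem := by
    intro e _ w hw
    rcases Sym2.mem_iff.mp hw with h | h <;> simp [h]
  sgn_unit := fun _ _ => Or.inr rfl

lemma mkLoop_unbal (v ℓ : ℕ) : IsUnbalancedCircuit (mkLoop v ℓ) := by
  refine ⟨⟨⟨⟨v, by simp [mkLoop]⟩, ?_⟩, ⟨ℓ, by simp [mkLoop]⟩, ?_⟩, ?_⟩
  · intro u hu w hw
    simp [mkLoop] at hu hw
    rw [hu, hw]
  · intro u hu
    simp [mkLoop] at hu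
    subst hu
    simp [degree, mkLoop]
  · simp [negEdgeCount, mkLoop]

lemma mkLoop_subgraph {G : SignedGraph} {v ℓ : ℕ} (hl : ℓ ∈ G.edges)
    (he : G.ends ℓ = s(v, v)) (hs : G.sgn ℓ = -1) : IsSubgraph (mkLoop v ℓ) G := by
  refine ⟨?_, ?_, ?_⟩
  · intro w hw
    simp [mkLoop] at hw
    rw [hw]
    exact G.ends_mem ℓ hl v (by rw [he]; simp)
  · intro g hg
    simp [mkLoop] at hg
    rw [hg]; exact hl
  · intro g hg
    simp [mkLoop] at hg
    subst hg
    exact ⟨he.symm, hs.symm⟩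

/-- A single vertex, as a trivial path. -/
def mkPoint (v : ℕ) : SignedGraph where
  verts := {v}
  edges := ∅
  ends := fun _ => s(v, v)
  sgn := fun _ => 1
  ends_mem := by intro e he; simp at he
  sgn_unit := by intro e he; simp at he

lemma mkPoint_path (v : ℕ) : IsPath (mkPoint v) v v := Or.inl ⟨rfl, rfl, rfl⟩

/-- Two negative loops at a common vertex. -/
def mkTwoLoops (v e f : ℕ) : SignedGraph where
  verts := {v}
  edges := {e, f}
  ends := fun _ => s(v, v)
  sgn := fun _ => -1
  ends_mem := by
    intro g _ w hw
    rcases Sym2.mem_iff.mp hw with h | h <;> simp [h]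
  sgn_unit := fun _ _ => Or.inr rfl

lemma mkTwoLoops_barbell {v e f : ℕ} (hef : e ≠ f) : IsBarbell (mkTwoLoops v e f) := by
  refine ⟨v, v, mkPoint v, mkLoop v e, mkLoop v f, mkPoint_path v,
    mkLoop_unbal v e, mkLoop_unbal v f, ?_, ?_, ?_, ?_, ?_, ?_, ?_⟩
  · refine ⟨⟨?_, ?_, ?_⟩, ⟨?_, ?_, ?_⟩, ⟨?_, ?_, ?_⟩, ?_, ?_⟩
    · simp [mkPoint, mkTwoLoops]
    · simp [mkPoint, mkTwoLoops]
    · intro g hg; simp [mkPoint] at hg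
    · simp [mkLoop, mkTwoLoops]
    · simp [mkLoop, mkTwoLoops]
    · intro g hg; exact ⟨rfl, rfl⟩
    · simp [mkLoop, mkTwoLoops]
    · simp [mkLoop, mkTwoLoops]
    · intro g hg; exact ⟨rfl, rfl⟩
    · simp [mkPoint, mkLoop, mkTwoLoops]
    · show ({e, f} : Finset ℕ) = ∅ ∪ {e} ∪ {f}
      ext g; simp
  · simp [mkPoint, mkLoop]
  · simp [mkPoint, mkLoop]
  · simp [mkLoop]
  · simp [mkPoint]
  · simp [mkPoint]
  · show ({e} : Finset ℕ) ∩ {f} = ∅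
    simp [Finset.singleton_inter_of_notMem, hef]

lemma mkTwoLoops_subgraph {G : SignedGraph} {v e f : ℕ}
    (heG : e ∈ G.edges) (hfG : f ∈ G.edges)
    (hee : G.ends e = s(v, v)) (hfe : G.ends f = s(v, v))
    (hes : G.sgn e = -1) (hfs : G.sgn f = -1) :
    IsSubgraph (mkTwoLoops v e f) G := by
  refine ⟨?_, ?_, ?_⟩
  · intro w hw
    simp [mkTwoLoops] at hw
    rw [hw]
    exact G.ends_mem e heG v (by rw [hee]; simp)
  · intro g hg
    simp [mkTwoLoops] at hg
    rcases hg with h | h <;> rw [h]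
    exacts [heG, hfG]
  · intro g hg
    simp [mkTwoLoops] at hg
    rcases hg with h | h <;> subst h
    · exact ⟨hee.symm, hes.symm⟩
    · exact ⟨hfe.symm, hfs.symm⟩
-- AUX END

lemma loop_barbell {S : SignedGraph} (hS : IsSignedCircuit S) {v ℓ : ℕ}
    (hl : ℓ ∈ S.edges) (he : S.ends ℓ = s(v, v)) (hs : S.sgn ℓ = -1) :
    ∃ x P C₁ C₂, IsPath P x v ∧ IsUnbalancedCircuit C₁ ∧ IsUnbalancedCircuit C₂ ∧
      IsUnion3 S P C₁ C₂ ∧ C₂.verts = {v} ∧ C₂.edges = {ℓ} ∧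
      P.verts ∩ C₁.verts = {x} ∧ P.verts ∩ C₂.verts = {v} ∧
      C₁.verts ∩ C₂.verts = ({x} : Finset ℕ) ∩ {v} ∧
      P.edges ∩ C₁.edges = ∅ ∧ P.edges ∩ C₂.edges = ∅ ∧ C₁.edges ∩ C₂.edges = ∅ := by
  rcases hS with ⟨hC, hbal⟩ | ⟨x, y, P, C₁, C₂, hP, hC₁, hC₂, hU, hPV1, hPV2, hV12, hPE1, hPE2, hE12⟩
  · exfalso
    obtain ⟨-, hE⟩ := circuit_loop hC hl he
    rw [negEdgeCount, hE, Finset.filter_singleton, if_pos hs] at hbal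
    simp at hbal
  · have hsubP := hU.1
    have hsubC₁ := hU.2.1
    have hsubC₂ := hU.2.2.1
    have hsplit : ℓ ∈ P.edges ∨ ℓ ∈ C₁.edges ∨ ℓ ∈ C₂.edges := by
      have h := hl
      rw [hU.2.2.2.2] at h
      simpa [Finset.mem_union, or_assoc] using h
    rcases hsplit with hP' | hC1' | hC2'
    · exact (path_no_loop hP hP' ((hsubP.2.2 ℓ hP').1.trans he)).elim
    · obtain ⟨hcv, hce⟩ := circuit_loop hC₁.1 hC1' ((hsubC₁.2.2 ℓ hC1').1.trans he)
      have hx : x = v := by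
        have hxm : x ∈ P.verts ∩ C₁.verts := by rw [hPV1]; simp
        rw [hcv] at hxm
        simpa using (Finset.mem_inter.mp hxm).2
      refine ⟨y, P, C₂, C₁, hx ▸ path_symm hP, hC₂, hC₁, isUnion3_swap hU, hcv, hce,
        hPV2, ?_, ?_, hPE2, hPE1, by rw [Finset.inter_comm]; exact hE12⟩
      · rw [hPV1, hx]
      · rw [Finset.inter_comm, hV12, hx, Finset.inter_comm]
    · obtain ⟨hcv, hce⟩ := circuit_loop hC₂.1 hC2' ((hsubC₂.2.2 ℓ hC2').1.trans he)
      have hy : y = v := by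
        have hym : y ∈ P.verts ∩ C₂.verts := by rw [hPV2]; simp
        rw [hcv] at hym
        simpa using (Finset.mem_inter.mp hym).2
      exact ⟨x, P, C₁, C₂, hy ▸ hP, hC₁, hC₂, hU, hcv, hce, hPV1,
        by rw [hPV2, hy], by rw [hV12, hy], hPE1, hPE2, hE12⟩

lemma both_loops {S : SignedGraph} (hS : IsSignedCircuit S) {v e f : ℕ} (hef : e ≠ f)
    (heS : e ∈ S.edges) (hfS : f ∈ S.edges)
    (hee : S.ends e = s(v, v)) (hes : S.sgn e = -1)
    (hfe : S.ends f = s(v, v)) (hfs : S.sgn f = -1) :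
    S.edges = {e, f} := by
  obtain ⟨x, P, C₁, C₂, hP, hC₁, hC₂, hU, hcv, hce, hPV1, hPV2, hV12, hPE1, hPE2, hE12⟩ :=
    loop_barbell hS hfS hfe hfs
  have heP : e ∉ P.edges := fun h => path_no_loop hP h ((hU.1.2.2 e h).1.trans hee)
  have heC₂ : e ∉ C₂.edges := by rw [hce]; simp [hef]
  have heC₁ : e ∈ C₁.edges := by
    have h := heS
    rw [hU.2.2.2.2] at h
    simp [Finset.mem_union] at h
    tauto
  obtain ⟨hcv1, hce1⟩ := circuit_loop hC₁.1 heC₁ ((hU.2.1.2.2 e heC₁).1.trans hee)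
  have hx : x = v := by
    have hv : v ∈ C₁.verts ∩ C₂.verts := by rw [hcv1, hcv]; simp
    rw [hV12] at hv
    have := (Finset.mem_inter.mp hv).1
    have h2 := Finset.mem_singleton.mp this
    exact h2.symm
  have hPE : P.edges = ∅ := by
    rcases hP with ⟨-, -, h⟩ | ⟨hne, -⟩
    · exact h
    · exact absurd hx hne
  rw [hU.2.2.2.2, hPE, hce1, hce]
  ext g; simp

/-- Replace the loop `ℓ` in `S` by the loop `ℓ'` (both loops at `v` in `G`). -/
def swapLoop (G S : SignedGraph) (v ℓ ℓ' : ℕ) : SignedGraph where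
  verts := insert v S.verts
  edges := insert ℓ' (S.edges.erase ℓ)
  ends := fun g => if g = ℓ' then s(v, v) else S.ends g
  sgn := fun g => if g = ℓ' then -1 else S.sgn g
  ends_mem := by
    intro g hg w hw
    by_cases h : g = ℓ'
    · rw [if_pos h] at hw
      rcases Sym2.mem_iff.mp hw with h' | h' <;> simp [h']
    · rw [if_neg h] at hw
      rcases Finset.mem_insert.mp hg with h' | h'
      · exact absurd h' h
      · exact Finset.mem_insert_of_mem (S.ends_mem g (Finset.mem_of_mem_erase h') w hw)
  sgn_unit := by
    intro g hg
    by_cases h : g = ℓ'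
    · rw [if_pos h]; exact Or.inr rfl
    · rw [if_neg h]
      rcases Finset.mem_insert.mp hg with h' | h'
      · exact absurd h' h
      · exact S.sgn_unit g (Finset.mem_of_mem_erase h')

lemma swapLoop_spec {G S : SignedGraph} (hSG : IsSubgraph S G) (hS : IsSignedCircuit S)
    {v ℓ ℓ' : ℕ} (hl : ℓ ∈ S.edges) (hle : G.ends ℓ = s(v, v)) (hls : G.sgn ℓ = -1)
    (hl' : ℓ' ∈ G.edges) (hl'e : G.ends ℓ' = s(v, v)) (hl's : G.sgn ℓ' = -1)
    (hnot : ℓ' ∉ S.edges) :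
    IsSubgraph (swapLoop G S v ℓ ℓ') G ∧ IsSignedCircuit (swapLoop G S v ℓ ℓ') ∧
      (swapLoop G S v ℓ ℓ').edges = insert ℓ' (S.edges.erase ℓ) := by
  have hSe : S.ends ℓ = s(v, v) := (hSG.2.2 ℓ hl).1.trans hle
  have hSs : S.sgn ℓ = -1 := (hSG.2.2 ℓ hl).2.trans hls
  obtain ⟨x, P, C₁, C₂, hP, hC₁, hC₂, hU, hcv, hce, hPV1, hPV2, hV12, hPE1, hPE2, hE12⟩ :=
    loop_barbell hS hl hSe hSs
  have hvS : v ∈ S.verts := hU.2.2.1.1 (by rw [hcv]; simp)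
  have hVeq : (swapLoop G S v ℓ ℓ').verts = S.verts := Finset.insert_eq_self.mpr hvS
  have hEnds : ∀ g, g ≠ ℓ' → (swapLoop G S v ℓ ℓ').ends g = S.ends g := fun g h => if_neg h
  have hSgn : ∀ g, g ≠ ℓ' → (swapLoop G S v ℓ ℓ').sgn g = S.sgn g := fun g h => if_neg h
  have hEnds' : (swapLoop G S v ℓ ℓ').ends ℓ' = s(v, v) := if_pos rfl
  have hSgn' : (swapLoop G S v ℓ ℓ').sgn ℓ' = -1 := if_pos rfl
  have hlP : ℓ ∉ P.edges := by
    intro h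
    have hmem : ℓ ∈ P.edges ∩ C₂.edges := Finset.mem_inter.mpr ⟨h, by rw [hce]; simp⟩
    rw [hPE2] at hmem; simp at hmem
  have hlC₁ : ℓ ∉ C₁.edges := by
    intro h
    have hmem : ℓ ∈ C₁.edges ∩ C₂.edges := Finset.mem_inter.mpr ⟨h, by rw [hce]; simp⟩
    rw [hE12] at hmem; simp at hmem
  have hErase : S.edges.erase ℓ = P.edges ∪ C₁.edges := by
    rw [hU.2.2.2.2, hce]
    ext g
    simp only [Finset.mem_erase, Finset.mem_union, Finset.mem_singleton]
    constructor
    · rintro ⟨hne, (h | h) | h⟩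
      · exact Or.inl h
      · exact Or.inr h
      · exact absurd h hne
    · rintro (h | h)
      · exact ⟨fun hq => hlP (hq ▸ h), Or.inl (Or.inl h)⟩
      · exact ⟨fun hq => hlC₁ (hq ▸ h), Or.inl (Or.inr h)⟩
  have hl'P : ℓ' ∉ P.edges := fun h => hnot (hU.1.2.1 h)
  have hl'C₁ : ℓ' ∉ C₁.edges := fun h => hnot (hU.2.1.2.1 h)
  have hsub : IsSubgraph (swapLoop G S v ℓ ℓ') G := by
    refine ⟨by rw [hVeq]; exact hSG.1, ?_, ?_⟩
    · intro g hg
      rcases Finset.mem_insert.mp hg with rfl | h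
      · exact hl'
      · exact hSG.2.1 (Finset.mem_of_mem_erase h)
    · intro g hg
      by_cases h : g = ℓ'
      · subst h
        exact ⟨hEnds'.trans hl'e.symm, hSgn'.trans hl's.symm⟩
      · have hgS : g ∈ S.edges := by
          rcases Finset.mem_insert.mp hg with h' | h'
          · exact absurd h' h
          · exact Finset.mem_of_mem_erase h'
        exact ⟨(hEnds g h).trans (hSG.2.2 g hgS).1, (hSgn g h).trans (hSG.2.2 g hgS).2⟩
  refine ⟨hsub, Or.inr ?_, rfl⟩
  refine ⟨x, v, P, C₁, mkLoop v ℓ', hP, hC₁, mkLoop_unbal v ℓ', ?_, hPV1, ?_, ?_, hPE1, ?_, ?_⟩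
  · refine ⟨⟨?_, ?_, ?_⟩, ⟨?_, ?_, ?_⟩, ⟨?_, ?_, ?_⟩, ?_, ?_⟩
    · rw [hVeq]; exact hU.1.1
    · intro g hg
      exact Finset.mem_insert_of_mem (by rw [hErase]; exact Finset.mem_union_left _ hg)
    · intro g hg
      have hne : g ≠ ℓ' := fun h => hl'P (h ▸ hg)
      exact ⟨(hU.1.2.2 g hg).1.trans (hEnds g hne).symm,
        (hU.1.2.2 g hg).2.trans (hSgn g hne).symm⟩
    · rw [hVeq]; exact hU.2.1.1
    · intro g hg
      exact Finset.mem_insert_of_mem (by rw [hErase]; exact Finset.mem_union_right _ hg)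
    · intro g hg
      have hne : g ≠ ℓ' := fun h => hl'C₁ (h ▸ hg)
      exact ⟨(hU.2.1.2.2 g hg).1.trans (hEnds g hne).symm,
        (hU.2.1.2.2 g hg).2.trans (hSgn g hne).symm⟩
    · intro w hw
      simp [mkLoop] at hw
      rw [hw]
      exact Finset.mem_insert_self _ _
    · intro g hg
      simp [mkLoop] at hg
      rw [hg]
      exact Finset.mem_insert_self _ _
    · intro g hg
      simp [mkLoop] at hg
      subst hg
      exact ⟨hEnds'.symm, hSgn'.symm⟩
    · show insert v S.verts = P.verts ∪ C₁.verts ∪ {v}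
      rw [Finset.insert_eq_self.mpr hvS, hU.2.2.2.1, hcv]
    · show insert ℓ' (S.edges.erase ℓ) = P.edges ∪ C₁.edges ∪ {ℓ'}
      rw [hErase]
      ext g
      simp only [Finset.mem_insert, Finset.mem_union, Finset.mem_singleton]
      tauto
  · show P.verts ∩ {v} = {v}
    rw [hcv] at hPV2; exact hPV2
  · show C₁.verts ∩ {v} = ({x} : Finset ℕ) ∩ {v}
    rw [hcv] at hV12; exact hV12
  · show P.edges ∩ {ℓ'} = ∅
    apply Finset.eq_empty_iff_forall_notMem.mpr
    intro g hg
    obtain ⟨h1, h2⟩ := Finset.mem_inter.mp hg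
    rw [Finset.mem_singleton] at h2
    exact hl'P (h2 ▸ h1)
  · show C₁.edges ∩ {ℓ'} = ∅
    apply Finset.eq_empty_iff_forall_notMem.mpr
    intro g hg
    obtain ⟨h1, h2⟩ := Finset.mem_inter.mp hg
    rw [Finset.mem_singleton] at h2
    exact hl'C₁ (h2 ▸ h1)

lemma coverCount_add (F₁ F₂ : Multiset SignedGraph) (e : ℕ) :
    coverCount (F₁ + F₂) e = coverCount F₁ e + coverCount F₂ e := by
  simp [coverCount, Multiset.filter_add]

lemma coverCount_eq_zero {F : Multiset SignedGraph} {e : ℕ} (h : ∀ S ∈ F, e ∉ S.edges) :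
    coverCount F e = 0 := by
  rw [coverCount, Multiset.filter_eq_nil.mpr h]
  rfl

lemma coverCount_eq_card {F : Multiset SignedGraph} {e : ℕ} (h : ∀ S ∈ F, e ∈ S.edges) :
    coverCount F e = Multiset.card F := by
  rw [coverCount, Multiset.filter_eq_self.mpr h]

lemma coverCount_map (F : Multiset SignedGraph) (φ : SignedGraph → SignedGraph) (e : ℕ)
    (h : ∀ S ∈ F, (e ∈ (φ S).edges ↔ e ∈ S.edges)) :
    coverCount (F.map φ) e = coverCount F e := by
  rw [coverCount, Multiset.filter_map, Multiset.card_map, coverCount]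
  congr 1
  apply Multiset.filter_congr
  intro S hS
  exact h S hS

lemma coverCount_replicate {n : ℕ} {S : SignedGraph} {e : ℕ} (h : e ∈ S.edges) :
    coverCount (Multiset.replicate n S) e = n := by
  rw [coverCount_eq_card (fun T hT => by rw [Multiset.eq_of_mem_replicate hT]; exact h),
    Multiset.card_replicate]

lemma coverCount_replicate_zero {n : ℕ} {S : SignedGraph} {e : ℕ} (h : e ∉ S.edges) :
    coverCount (Multiset.replicate n S) e = 0 :=
  coverCount_eq_zero (fun T hT => by rw [Multiset.eq_of_mem_replicate hT]; exact h)

lemma coverable_iff (G : SignedGraph) : G.Coverable ↔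
    ∀ e ∈ G.edges, ∃ S, IsSubgraph S G ∧ IsSignedCircuit S ∧ e ∈ S.edges := by
  constructor
  · rintro ⟨F, hF, hcov⟩ e he
    obtain ⟨S, hS⟩ := Multiset.card_pos_iff_exists_mem.mp (hcov e he)
    rw [Multiset.mem_filter] at hS
    exact ⟨S, (hF S hS.1).1, (hF S hS.1).2, hS.2⟩
  · intro h
    classical
    refine ⟨G.edges.attach.val.map (fun x => Classical.choose (h x.1 x.2)), ?_, ?_⟩
    · intro S hS
      rw [Multiset.mem_map] at hS
      obtain ⟨x, -, rfl⟩ := hS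
      obtain ⟨h1, h2, -⟩ := Classical.choose_spec (h x.1 x.2)
      exact ⟨h1, h2⟩
    · intro e he
      apply Multiset.card_pos_iff_exists_mem.mpr
      refine ⟨Classical.choose (h e he), ?_⟩
      rw [Multiset.mem_filter]
      refine ⟨Multiset.mem_map.mpr ⟨⟨e, he⟩, ?_, rfl⟩, (Classical.choose_spec (h e he)).2.2⟩
      rw [Finset.mem_val]
      exact Finset.mem_attach _ _
    
lemma k4_deleteEdges {G : SignedGraph} (h : K4MinorFree G) (S : Finset ℕ) :
    K4MinorFree (G.deleteEdges S) := by
  intro hK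
  apply h
  obtain ⟨B, h1, h2, h3, h4, h5⟩ := hK
  refine ⟨B, h1, h2, h3, ?_, ?_⟩
  · intro i u hu w hw
    refine Relation.ReflTransGen.mono ?_ _ _ (h4 i u hu w hw)
    rintro a b ⟨ha, hb, g, hg, hge⟩
    exact ⟨ha, hb, g, (Finset.mem_sdiff.mp hg).1, hge⟩
  · intro i j hij
    obtain ⟨g, hg, u, hu, w, hw, hends⟩ := h5 i j hij
    exact ⟨g, (Finset.mem_sdiff.mp hg).1, u, hu, w, hw, hends⟩

/-- **Claim 1(1).** In a minimal counterexample, no two negative loops share a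
common vertex. -/
theorem minCE_no_two_negative_loops_at_a_vertex
    (G : SignedGraph) (hmin : MinimalCounterexample G) :
    ¬ ∃ (v e f : ℕ), e ∈ G.edges ∧ f ∈ G.edges ∧ e ≠ f ∧
        G.ends e = s(v, v) ∧ G.ends f = s(v, v) ∧
        G.sgn e = -1 ∧ G.sgn f = -1 := by
  rintro ⟨v, e, f, heG, hfG, hef, hee, hfe, hes, hfs⟩
  obtain ⟨hcov, hk4, h6, hminimal⟩ := hmin
  classical
  have hBef_sub : IsSubgraph (mkTwoLoops v e f) G :=
    mkTwoLoops_subgraph heG hfG hee hfe hes hfs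
  have hBef : IsSignedCircuit (mkTwoLoops v e f) := Or.inr (mkTwoLoops_barbell hef)
  have hBefE : (mkTwoLoops v e f).edges = {e, f} := rfl
  by_cases hcase : ∃ S, IsSubgraph S G ∧ IsSignedCircuit S ∧ e ∈ S.edges ∧ f ∉ S.edges
  · -- Case A: delete f
    set G1 := G.deleteEdges {f} with hG1def
    have hG1sub : IsSubgraph G1 G := deleteEdges_subgraph G {f}
    have hG1E : G1.edges = G.edges \ {f} := rfl
    have heG1 : e ∈ G1.edges := Finset.mem_sdiff.mpr ⟨heG, by simp [hef]⟩
    have hnoF : ∀ T : SignedGraph, IsSubgraph T G1 → f ∉ T.edges := by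
      intro T hT h
      have := hT.2.1 h
      rw [hG1E] at this
      exact (Finset.mem_sdiff.mp this).2 (by simp)
    have hcov1 : G1.Coverable := by
      rw [coverable_iff]
      intro g hg
      have hgG : g ∈ G.edges := (Finset.mem_sdiff.mp hg).1
      have hgf : g ≠ f := by
        have := (Finset.mem_sdiff.mp hg).2
        simpa using this
      obtain ⟨T, hTG, hTc, hgT⟩ := (coverable_iff G).mp hcov g hgG
      by_cases hfT : f ∈ T.edges
      · by_cases heT : e ∈ T.edges
        · have hTE := both_loops hTc hef heT hfT
            ((hTG.2.2 e heT).1.trans hee) ((hTG.2.2 e heT).2.trans hes)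
            ((hTG.2.2 f hfT).1.trans hfe) ((hTG.2.2 f hfT).2.trans hfs)
          have hge : g = e := by
            rw [hTE] at hgT
            simp [Finset.mem_insert, hgf] at hgT
            exact hgT
          obtain ⟨S, hSG, hSc, heS, hfS⟩ := hcase
          refine ⟨S, ⟨hSG.1, ?_, fun a ha => hSG.2.2 a ha⟩, hSc, hge ▸ heS⟩
          intro a ha
          refine Finset.mem_sdiff.mpr ⟨hSG.2.1 ha, ?_⟩
          simp only [Finset.mem_singleton]
          intro h
          exact hfS (h ▸ ha)
        · obtain ⟨hsub', hcirc', hE'⟩ :=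
            swapLoop_spec hTG hTc hfT hfe hfs heG hee hes heT
          refine ⟨swapLoop G T v f e, ⟨hsub'.1, ?_, fun a ha => hsub'.2.2 a ha⟩, hcirc', ?_⟩
          · intro a ha
            rw [hE'] at ha
            rcases Finset.mem_insert.mp ha with rfl | h
            · exact heG1
            · refine Finset.mem_sdiff.mpr ⟨hTG.2.1 (Finset.mem_of_mem_erase h), ?_⟩
              simp only [Finset.mem_singleton]
              exact (Finset.mem_erase.mp h).1
          · rw [hE']
            exact Finset.mem_insert_of_mem (Finset.mem_erase.mpr ⟨hgf, hgT⟩)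
      · refine ⟨T, ⟨hTG.1, ?_, fun a ha => hTG.2.2 a ha⟩, hTc, hgT⟩
        intro a ha
        refine Finset.mem_sdiff.mpr ⟨hTG.2.1 ha, ?_⟩
        simp only [Finset.mem_singleton]
        intro h
        exact hfT (h ▸ ha)
    have hk41 : G1.K4MinorFree := k4_deleteEdges hk4 {f}
    have hlt : G1.edges.card < G.edges.card :=
      Finset.card_lt_card (Finset.sdiff_ssubset (by simpa using hfG) ⟨f, by simp⟩)
    have h61 : G1.HasSixCover := by
      by_contra h
      exact absurd (hminimal G1 hcov1 hk41 h) (not_le.mpr hlt)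
    obtain ⟨F', hF'mem, hF'cnt⟩ := h61
    set A := F'.filter (fun S => e ∈ S.edges) with hA
    set R := F'.filter (fun S => e ∉ S.edges) with hR
    have hFA : A + R = F' := Multiset.filter_add_not _ _
    have hcardA : Multiset.card A = 6 := hF'cnt e heG1
    obtain ⟨A₁, A₂, hAsplit, hc1, hc2⟩ :
        ∃ A₁ A₂, A₁ + A₂ = A ∧ Multiset.card A₁ = 3 ∧ Multiset.card A₂ = 3 := by
      refine ⟨(A.toList.take 3 : List SignedGraph), (A.toList.drop 3 : List SignedGraph),
        ?_, ?_, ?_⟩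
      · rw [Multiset.coe_add, List.take_append_drop, Multiset.coe_toList]
      · simp only [Multiset.coe_card, List.length_take, Multiset.length_toList, hcardA]
        rfl
      · simp only [Multiset.coe_card, List.length_drop, Multiset.length_toList, hcardA]
    have hAmem : ∀ S ∈ A, IsSubgraph S G1 ∧ IsSignedCircuit S ∧ e ∈ S.edges := by
      intro S hS
      rw [hA, Multiset.mem_filter] at hS
      exact ⟨(hF'mem S hS.1).1, (hF'mem S hS.1).2, hS.2⟩
    have hA₁ : ∀ S ∈ A₁, S ∈ A := by
      intro S hS; rw [← hAsplit]; exact Multiset.mem_add.mpr (Or.inl hS)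
    have hA₂ : ∀ S ∈ A₂, S ∈ A := by
      intro S hS; rw [← hAsplit]; exact Multiset.mem_add.mpr (Or.inr hS)
    set φ : SignedGraph → SignedGraph := fun S => swapLoop G S v e f with hφ
    have hswap : ∀ S ∈ A₂, IsSubgraph (φ S) G ∧ IsSignedCircuit (φ S) ∧
        (φ S).edges = insert f (S.edges.erase e) := by
      intro S hS
      obtain ⟨hSG1, hSc, heS⟩ := hAmem S (hA₂ S hS)
      exact swapLoop_spec (subgraph_trans hSG1 hG1sub) hSc heS hee hes hfG hfe hfs
        (hnoF S hSG1)
    apply h6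
    refine ⟨R + A₁ + A₂.map φ + Multiset.replicate 3 (mkTwoLoops v e f), ?_, ?_⟩
    · intro S hS
      rcases Multiset.mem_add.mp hS with hS | hS
      · rcases Multiset.mem_add.mp hS with hS | hS
        · rcases Multiset.mem_add.mp hS with hS | hS
          · have h := hF'mem S (Multiset.mem_of_mem_filter hS)
            exact ⟨subgraph_trans h.1 hG1sub, h.2⟩
          · obtain ⟨h1, h2, -⟩ := hAmem S (hA₁ S hS)
            exact ⟨subgraph_trans h1 hG1sub, h2⟩
        · obtain ⟨T, hT, rfl⟩ := Multiset.mem_map.mp hS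
          exact ⟨(hswap T hT).1, (hswap T hT).2.1⟩
      · rw [Multiset.eq_of_mem_replicate hS]
        exact ⟨hBef_sub, hBef⟩
    · intro g hg
      rw [coverCount_add, coverCount_add, coverCount_add]
      by_cases hgf : g = f
      · subst hgf
        rw [coverCount_eq_zero (fun S hS =>
            hnoF S (hF'mem S (Multiset.mem_of_mem_filter hS)).1)]
        rw [coverCount_eq_zero (fun S hS => hnoF S (hAmem S (hA₁ S hS)).1)]
        rw [coverCount_eq_card (fun T hT => ?_), Multiset.card_map, hc2,
          coverCount_replicate (by rw [hBefE]; simp)]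
        · obtain ⟨U, hU, rfl⟩ := Multiset.mem_map.mp hT
          rw [(hswap U hU).2.2]
          exact Finset.mem_insert_self _ _
      · by_cases hge : g = e
        · subst hge
          rw [coverCount_eq_zero (fun S hS => ?_),
            coverCount_eq_card (fun S hS => (hAmem S (hA₁ S hS)).2.2), hc1,
            coverCount_eq_zero (fun T hT => ?_),
            coverCount_replicate (by rw [hBefE]; simp)]
          · obtain ⟨U, hU, rfl⟩ := Multiset.mem_map.mp hT
            rw [(hswap U hU).2.2]
            simp only [Finset.mem_insert, Finset.mem_erase]
            rintro (h | ⟨h1, -⟩)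
            · exact hef h
            · exact h1 rfl
          · rw [hR, Multiset.mem_filter] at hS
            exact hS.2
        · have hgG1 : g ∈ G1.edges := Finset.mem_sdiff.mpr ⟨hg, by simpa using hgf⟩
          have h6g : coverCount F' g = 6 := hF'cnt g hgG1
          rw [← hFA, coverCount_add, ← hAsplit, coverCount_add] at h6g
          rw [coverCount_map A₂ φ g (fun S hS => ?_),
            coverCount_replicate_zero (by rw [hBefE]; simp [hge, hgf])]
          · omega
          · rw [(hswap S hS).2.2]
            simp [Finset.mem_insert, Finset.mem_erase, hge, hgf]
  · -- Case B: delete both loops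
    push_neg at hcase
    have hcase' : ∀ S, IsSubgraph S G → IsSignedCircuit S → f ∈ S.edges → e ∈ S.edges := by
      intro S hSG hSc hfS
      by_contra heS
      obtain ⟨hsub', hcirc', hE'⟩ := swapLoop_spec hSG hSc hfS hfe hfs heG hee hes heS
      have hfmem : f ∈ (swapLoop G S v f e).edges :=
        hcase _ hsub' hcirc' (by rw [hE']; exact Finset.mem_insert_self _ _)
      rw [hE'] at hfmem
      rcases Finset.mem_insert.mp hfmem with h | h
      · exact hef h.symm
      · exact (Finset.mem_erase.mp h).1 rfl
    set G2 := G.deleteEdges {e, f} with hG2def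
    have hG2sub : IsSubgraph G2 G := deleteEdges_subgraph G {e, f}
    have hG2E : G2.edges = G.edges \ {e, f} := rfl
    have hcov2 : G2.Coverable := by
      rw [coverable_iff]
      intro g hg
      have hgG : g ∈ G.edges := (Finset.mem_sdiff.mp hg).1
      have hgef : g ≠ e ∧ g ≠ f := by
        have := (Finset.mem_sdiff.mp hg).2
        simp only [Finset.mem_insert, Finset.mem_singleton] at this
        tauto
      obtain ⟨T, hTG, hTc, hgT⟩ := (coverable_iff G).mp hcov g hgG
      have heT : e ∉ T.edges := by
        intro h
        have hfT := hcase T hTG hTc h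
        have hTE := both_loops hTc hef h hfT
          ((hTG.2.2 e h).1.trans hee) ((hTG.2.2 e h).2.trans hes)
          ((hTG.2.2 f hfT).1.trans hfe) ((hTG.2.2 f hfT).2.trans hfs)
        rw [hTE] at hgT
        simp only [Finset.mem_insert, Finset.mem_singleton] at hgT
        rcases hgT with h' | h'
        · exact hgef.1 h'
        · exact hgef.2 h'
      have hfT : f ∉ T.edges := fun h => heT (hcase' T hTG hTc h)
      refine ⟨T, ⟨hTG.1, ?_, fun a ha => hTG.2.2 a ha⟩, hTc, hgT⟩
      intro a ha
      refine Finset.mem_sdiff.mpr ⟨hTG.2.1 ha, ?_⟩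
      simp only [Finset.mem_insert, Finset.mem_singleton]
      rintro (h | h)
      · exact heT (h ▸ ha)
      · exact hfT (h ▸ ha)
    have hk42 : G2.K4MinorFree := k4_deleteEdges hk4 {e, f}
    have hlt : G2.edges.card < G.edges.card := by
      apply Finset.card_lt_card
      apply Finset.sdiff_ssubset
      · intro a ha
        simp only [Finset.mem_insert, Finset.mem_singleton] at ha
        rcases ha with h | h <;> rw [h]
        exacts [heG, hfG]
      · exact ⟨e, by simp⟩
    have h62 : G2.HasSixCover := by
      by_contra h
      exact absurd (hminimal G2 hcov2 hk42 h) (not_le.mpr hlt)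
    obtain ⟨F'', hF''mem, hF''cnt⟩ := h62
    apply h6
    refine ⟨F'' + Multiset.replicate 6 (mkTwoLoops v e f), ?_, ?_⟩
    · intro S hS
      rcases Multiset.mem_add.mp hS with hS | hS
      · exact ⟨subgraph_trans (hF''mem S hS).1 hG2sub, (hF''mem S hS).2⟩
      · rw [Multiset.eq_of_mem_replicate hS]
        exact ⟨hBef_sub, hBef⟩
    · intro g hg
      rw [coverCount_add]
      by_cases hge : g = e
      · subst hge
        rw [coverCount_eq_zero (fun S hS => ?_), coverCount_replicate (by rw [hBefE]; simp)]
        have := (hF''mem S hS).1.2.1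
        intro h
        have h2 := this h
        rw [hG2E] at h2
        exact (Finset.mem_sdiff.mp h2).2 (by simp)
      · by_cases hgf : g = f
        · subst hgf
          rw [coverCount_eq_zero (fun S hS => ?_), coverCount_replicate (by rw [hBefE]; simp)]
          have := (hF''mem S hS).1.2.1
          intro h
          have h2 := this h
          rw [hG2E] at h2
          exact (Finset.mem_sdiff.mp h2).2 (by simp)
        · have hgG2 : g ∈ G2.edges := by
            refine Finset.mem_sdiff.mpr ⟨hg, ?_⟩
            simp [hge, hgf]
          rw [hF''cnt g hgG2, coverCount_replicate_zero (by rw [hBefE]; simp [hge, hgf])]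

end SignedGraph
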